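/- Let Ψ = (E, Δ) be a pure ordered complex satisfying both the quasi-independence axiom and the First Basis Property, and let 𝒥 be an order ideal of the Gale order on the facets. Then the Gale truncation Ψ[𝒥] satisfies the quasi-independence axiom. -/

import Mathlib

variable {α : Type*} [LinearOrder α] [DecidableEq α] [Fintype α]

/-- A (abstract) simplicial complex: a downward closed family of finite sets. -/
def IsComplex (Δ : Finset α → Prop) : Prop :=
  ∀ ⦃s t : Finset α⦄, Δ t → s ⊆ t → Δ s

/-- A simplicial complex with all faces contained in the ground set `E`. -/
def IsComplexOn (E : Finset α) (Δ : Finset α → Prop) : Prop :=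
  (∀ ⦃s⦄, Δ s → s ⊆ E) ∧ IsComplex Δ

/-- A facet (basis): a maximal face. -/
def IsFacet (Δ : Finset α → Prop) (B : Finset α) : Prop :=
  Δ B ∧ ∀ ⦃C⦄, Δ C → B ⊆ C → B = C

/-- A circuit with respect to the ground set `E`: a minimal non-face contained in `E`. -/
def IsCircuitOn (E : Finset α) (Δ : Finset α → Prop) (C : Finset α) : Prop :=
  C ⊆ E ∧ ¬ Δ C ∧ ∀ ⦃D⦄, D ⊂ C → Δ D

/-- A circuit: a minimal non-face. -/
def IsCircuit (Δ : Finset α → Prop) (C : Finset α) : Prop :=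
  ¬ Δ C ∧ ∀ ⦃D⦄, D ⊂ C → Δ D

/-- Purity: all facets have the same cardinality. -/
def IsPure (Δ : Finset α → Prop) : Prop :=
  ∀ ⦃B B'⦄, IsFacet Δ B → IsFacet Δ B' → B.card = B'.card

/-- Lexicographic order on finite sets, comparing sorted element lists:
`B <lex B'` iff the minimum of the symmetric difference lies in `B`. -/
def lexLt (B B' : Finset α) : Prop :=
  ∃ a ∈ B \ B', ∀ b ∈ symmDiff B B', a ≤ b

def lexLe (B B' : Finset α) : Prop := B = B' ∨ lexLt B B'

/-- `B₀` is the lexicographically smallest facet of `Δ`. -/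
def IsLexMinFacet (Δ : Finset α → Prop) (B₀ : Finset α) : Prop :=
  IsFacet Δ B₀ ∧ ∀ ⦃B⦄, IsFacet Δ B → lexLe B₀ B

/-- Gale (componentwise) order: the `i`-th smallest element of `B` is at most
the `i`-th smallest element of `B'`, for all `i` (in particular equal cardinalities). -/
def galeLe (B B' : Finset α) : Prop :=
  List.Forall₂ (· ≤ ·) (Finset.sort B (· ≤ ·)) (Finset.sort B' (· ≤ ·))

/-- Quasi-exchange axiom (without the purity requirement). -/
def QE (Δ : Finset α → Prop) : Prop :=
  ∀ ⦃B₁ B₂⦄, IsFacet Δ B₁ → IsFacet Δ B₂ →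
    ∀ b₁ ∈ B₁ \ B₂, (∀ b ∈ B₂ \ B₁, b < b₁) →
      ∃ b₂ ∈ B₂ \ B₁, IsFacet Δ (insert b₂ (B₁.erase b₁))

/-- Quasi-circuit axiom (with circuits taken relative to the ground set `E`). -/
def QCon (E : Finset α) (Δ : Finset α → Prop) : Prop :=
  ∀ ⦃C₁ C₂⦄, IsCircuitOn E Δ C₁ → IsCircuitOn E Δ C₂ → C₁ ≠ C₂ →
    ∀ c ∈ C₁ ∩ C₂, (∃ m ∈ symmDiff C₁ C₂, c < m) →
      ∃ C₃, IsCircuitOn E Δ C₃ ∧ C₃ ⊆ (C₁ ∪ C₂).erase c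

/-- Quasi-circuit axiom (circuits are arbitrary minimal non-faces). -/
def QC (Δ : Finset α → Prop) : Prop :=
  ∀ ⦃C₁ C₂⦄, IsCircuit Δ C₁ → IsCircuit Δ C₂ → C₁ ≠ C₂ →
    ∀ c ∈ C₁ ∩ C₂, (∃ m ∈ symmDiff C₁ C₂, c < m) →
      ∃ C₃, IsCircuit Δ C₃ ∧ C₃ ⊆ (C₁ ∪ C₂).erase c

/-- `b` is an internally passive element of the facet `B`. -/
def InternallyPassive (Δ : Finset α → Prop) (B : Finset α) (b : α) : Prop :=
  b ∈ B ∧ ∃ b', b' < b ∧ b' ∉ B ∧ IsFacet Δ (insert b' (B.erase b))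

/-- Contraction of a face `I`. -/
def contract (Δ : Finset α → Prop) (I : Finset α) : Finset α → Prop :=
  fun J => Disjoint J I ∧ Δ (J ∪ I)

/-- Quasi-independence axiom: `Δ` is pure and for faces `I₁, I₂` with `|I₁| > |I₂|`,
if `I₁ \ I ⊆ B_{I,0}` for some `I ⊆ I₁ ∩ I₂`, then some `e ∈ I₁ \ I₂` extends `I₂`. -/
def QI (Δ : Finset α → Prop) : Prop :=
  IsPure Δ ∧ ∀ ⦃I₁ I₂ : Finset α⦄, Δ I₁ → Δ I₂ → I₂.card < I₁.card →
    (∃ I, I ⊆ I₁ ∩ I₂ ∧ ∃ B, IsLexMinFacet (contract Δ I) B ∧ I₁ \ I ⊆ B) →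
    ∃ e ∈ I₁ \ I₂, Δ (insert e I₂)

/-- The First Basis Property. -/
inductive FBP : (Finset α → Prop) → Prop
  | rank1 (Δ : Finset α → Prop) (h : ∀ s, Δ s → s.card ≤ 1) : FBP Δ
  | unique (Δ : Finset α → Prop) (B : Finset α) (hB : IsFacet Δ B)
      (hu : ∀ B', IsFacet Δ B' → B' = B) : FBP Δ
  | step (Δ : Finset α → Prop) (B₀ : Finset α) (h₀ : IsLexMinFacet Δ B₀)
      (h1 : ∀ v, Δ {v} → v ∉ B₀ → FBP (contract Δ {v}))
      (h2 : ∀ v, Δ {v} → v ∉ B₀ →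
        ∃ Bv, IsLexMinFacet (contract Δ {v}) Bv ∧ Bv ⊆ B₀) :
      FBP Δ

section Aux
set_option linter.unusedSectionVars false
variable {α : Type*} [LinearOrder α] [DecidableEq α] [Fintype α]

/-- Every face extends to a facet. -/
lemma exists_facet (Γ : Finset α → Prop) {s : Finset α} (hs : Γ s) :
    ∃ C, IsFacet Γ C ∧ s ⊆ C := by
  have key : ∀ n (s : Finset α), Γ s → (Finset.univ : Finset α).card - s.card ≤ n →
      ∃ C, IsFacet Γ C ∧ s ⊆ C := by
    intro n
    induction n with
    | zero =>
      intro s hs hn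
      have hsu : s = Finset.univ := by
        apply Finset.eq_univ_of_card
        have h1 := Finset.card_le_card (Finset.subset_univ s)
        rw [Finset.card_univ] at h1 hn
        omega
      refine ⟨s, ⟨hs, ?_⟩, subset_rfl⟩
      intro C hC hsC
      exact Finset.Subset.antisymm hsC (hsu ▸ Finset.subset_univ C)
    | succ n ih =>
      intro s hs hn
      by_cases hf : IsFacet Γ s
      · exact ⟨s, hf, subset_rfl⟩
      · simp only [IsFacet, not_and, not_forall] at hf
        obtain ⟨C, hC, hsC, hne⟩ := hf hs
        have hlt : s.card < C.card :=
          Finset.card_lt_card (Finset.ssubset_iff_subset_ne.2 ⟨hsC, hne⟩)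
        obtain ⟨D, hD, hCD⟩ := ih C hC (by
          have := Finset.card_le_card (Finset.subset_univ C)
          omega)
        exact ⟨D, hD, hsC.trans hCD⟩
  exact key _ s hs le_rfl

lemma lexLe_refl (B : Finset α) : lexLe B B := Or.inl rfl

lemma lexLt_irrefl (B : Finset α) : ¬ lexLt B B := by
  rintro ⟨a, ha, -⟩
  simp at ha

lemma lexLt_asymm {B C : Finset α} (h : lexLt B C) (h' : lexLt C B) : False := by
  obtain ⟨a, ha, hall⟩ := h
  obtain ⟨a', ha', hall'⟩ := h'
  simp only [Finset.mem_sdiff] at ha ha'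
  have h1 : a ≤ a' := hall a' (Finset.mem_symmDiff.2 (Or.inr ⟨ha'.1, ha'.2⟩))
  have h2 : a' ≤ a := hall' a (by rw [Finset.mem_symmDiff]; exact Or.inr ⟨ha.1, ha.2⟩)
  have : a = a' := le_antisymm h1 h2
  exact ha'.2 (this ▸ ha.1)

lemma lexLe_antisymm {B C : Finset α} (h : lexLe B C) (h' : lexLe C B) : B = C := by
  rcases h with h | h
  · exact h
  rcases h' with h' | h'
  · exact h'.symm
  exact absurd h' (fun x => lexLt_asymm h x)

lemma lexLe_total (B C : Finset α) : lexLe B C ∨ lexLe C B := by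
  by_cases h : B = C
  · exact Or.inl (Or.inl h)
  have hne : (symmDiff B C).Nonempty := by
    rw [Finset.nonempty_iff_ne_empty]
    intro hempty
    exact h (by simpa [symmDiff_eq_bot] using hempty)
  set a := (symmDiff B C).min' hne with ha
  have hmem : a ∈ symmDiff B C := Finset.min'_mem _ hne
  have hall : ∀ b ∈ symmDiff B C, a ≤ b := fun b hb => Finset.min'_le _ b hb
  rw [Finset.mem_symmDiff] at hmem
  rcases hmem with ⟨h1, h2⟩ | ⟨h1, h2⟩
  · exact Or.inl (Or.inr ⟨a, Finset.mem_sdiff.2 ⟨h1, h2⟩, hall⟩)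
  · refine Or.inr (Or.inr ⟨a, Finset.mem_sdiff.2 ⟨h1, h2⟩, fun b hb => hall b ?_⟩)
    rw [Finset.mem_symmDiff] at hb ⊢
    tauto

lemma lexLt_trans {B₁ B₂ B₃ : Finset α} (h : lexLt B₁ B₂) (h' : lexLt B₂ B₃) :
    lexLt B₁ B₃ := by
  obtain ⟨a₁, ha₁, hall₁⟩ := h
  obtain ⟨a₂, ha₂, hall₂⟩ := h'
  simp only [Finset.mem_sdiff] at ha₁ ha₂
  have hbound : ∀ b ∈ symmDiff B₁ B₃, min a₁ a₂ ≤ b := by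
    intro b hb
    rw [Finset.mem_symmDiff] at hb
    rcases hb with ⟨hb1, hb3⟩ | ⟨hb3, hb1⟩
    · by_cases hb2 : b ∈ B₂
      · exact le_trans (min_le_right _ _)
          (hall₂ b (Finset.mem_symmDiff.2 (Or.inl ⟨hb2, hb3⟩)))
      · exact le_trans (min_le_left _ _)
          (hall₁ b (Finset.mem_symmDiff.2 (Or.inl ⟨hb1, hb2⟩)))
    · by_cases hb2 : b ∈ B₂
      · exact le_trans (min_le_left _ _)
          (hall₁ b (Finset.mem_symmDiff.2 (Or.inr ⟨hb2, hb1⟩)))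
      · exact le_trans (min_le_right _ _)
          (hall₂ b (Finset.mem_symmDiff.2 (Or.inr ⟨hb3, hb2⟩)))
  rcases le_total a₁ a₂ with h12 | h21
  · have hmin : min a₁ a₂ = a₁ := min_eq_left h12
    have ha13 : a₁ ∉ B₃ := by
      intro hmem
      have : a₂ ≤ a₁ := hall₂ a₁ (Finset.mem_symmDiff.2 (Or.inr ⟨hmem, ha₁.2⟩))
      have heq : a₂ = a₁ := le_antisymm this h12
      rw [heq] at ha₂
      exact ha₁.2 ha₂.1
    exact ⟨a₁, Finset.mem_sdiff.2 ⟨ha₁.1, ha13⟩, by rw [← hmin]; exact hbound⟩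
  · have hmin : min a₁ a₂ = a₂ := min_eq_right h21
    have ha21 : a₂ ∈ B₁ := by
      by_contra hmem
      have : a₁ ≤ a₂ := hall₁ a₂ (Finset.mem_symmDiff.2 (Or.inr ⟨ha₂.1, hmem⟩))
      have heq : a₁ = a₂ := le_antisymm this h21
      rw [heq] at ha₁
      exact ha₁.2 ha₂.1
    exact ⟨a₂, Finset.mem_sdiff.2 ⟨ha21, ha₂.2⟩, by rw [← hmin]; exact hbound⟩

lemma lexLe_trans {B₁ B₂ B₃ : Finset α} (h : lexLe B₁ B₂) (h' : lexLe B₂ B₃) :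
    lexLe B₁ B₃ := by
  rcases h with rfl | h
  · exact h'
  rcases h' with rfl | h'
  · exact Or.inr h
  exact Or.inr (lexLt_trans h h')

/-- Any nonempty finite family has a lex-minimum. -/
lemma exists_lexMin (S : Finset (Finset α)) (hS : S.Nonempty) :
    ∃ B ∈ S, ∀ C ∈ S, lexLe B C := by
  induction S using Finset.induction with
  | empty => exact absurd hS (by simp)
  | @insert x S hx ih =>
    rcases S.eq_empty_or_nonempty with rfl | hSne
    · exact ⟨x, by simp, by simp [lexLe_refl]⟩
    obtain ⟨B, hB, hmin⟩ := ih hSne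
    rcases lexLe_total x B with hxB | hBx
    · refine ⟨x, Finset.mem_insert_self _ _, ?_⟩
      intro C hC
      rcases Finset.mem_insert.1 hC with rfl | hC
      · exact lexLe_refl _
      · exact lexLe_trans hxB (hmin C hC)
    · refine ⟨B, Finset.mem_insert_of_mem hB, ?_⟩
      intro C hC
      rcases Finset.mem_insert.1 hC with rfl | hC
      · exact hBx
      · exact hmin C hC

lemma exists_lexMinFacet (Γ : Finset α → Prop) {s : Finset α} (hs : Γ s) :
    ∃ B, IsLexMinFacet Γ B := by
  classical
  obtain ⟨C, hC, -⟩ := exists_facet Γ hs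
  have : ∃ B ∈ Finset.univ.filter (fun B => IsFacet Γ B),
      ∀ D ∈ Finset.univ.filter (fun B => IsFacet Γ B), lexLe B D := by
    apply exists_lexMin
    exact ⟨C, by simp [hC]⟩
  obtain ⟨B, hB, hmin⟩ := this
  simp only [Finset.mem_filter, Finset.mem_univ, true_and] at hB hmin
  exact ⟨B, hB, fun D hD => hmin D hD⟩

lemma lexMinFacet_unique {Γ : Finset α → Prop} {B B' : Finset α}
    (h : IsLexMinFacet Γ B) (h' : IsLexMinFacet Γ B') : B = B' :=
  lexLe_antisymm (h.2 h'.1) (h'.2 h.1)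

end Aux
section Aux2
set_option linter.unusedSectionVars false
variable {α : Type*} [LinearOrder α] [DecidableEq α] [Fintype α]

lemma forall₂_orderedInsert_right {l : List α} {c b : α} :
    ∀ {m : List α}, List.Pairwise (· ≤ ·) (c :: l) → c ≤ b →
      List.Forall₂ (· ≤ ·) m (c :: l) →
      List.Forall₂ (· ≤ ·) m (List.orderedInsert (· ≤ ·) b l) := by
  induction l generalizing c with
  | nil =>
    intro m hsort hcb hf
    rcases hf with _ | ⟨hxc, hnil⟩
    rcases hnil
    exact List.Forall₂.cons (le_trans hxc hcb) List.Forall₂.nil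
  | cons y l ih =>
    intro m hsort hcb hf
    rcases hf with _ | ⟨hxc, hf⟩
    rename_i x m
    simp only [List.orderedInsert]
    split
    · rename_i hby
      exact List.Forall₂.cons (le_trans hxc hcb) hf
    · rename_i hby
      have hyb : y ≤ b := le_of_not_ge (by simpa using hby)
      have hsort' : List.Pairwise (· ≤ ·) (y :: l) := hsort.of_cons
      have hcy : c ≤ y := (List.pairwise_cons.1 hsort).1 y (by simp)
      exact List.Forall₂.cons (le_trans hxc hcy) (ih hsort' hyb hf)

lemma forall₂_orderedInsert_left {l₂ : List α} {c a : α} :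
    ∀ {l₁ : List α}, List.Pairwise (· ≤ ·) (c :: l₂) → a ≤ c →
      List.Forall₂ (· ≤ ·) l₁ l₂ →
      List.Forall₂ (· ≤ ·) (List.orderedInsert (· ≤ ·) a l₁) (c :: l₂) := by
  induction l₂ generalizing c with
  | nil =>
    intro l₁ hsort hac hf
    rcases hf
    exact List.Forall₂.cons hac List.Forall₂.nil
  | cons y l₂ ih =>
    intro l₁ hsort hac hf
    rcases hf with _ | ⟨hxy, hf⟩
    rename_i x l₁
    simp only [List.orderedInsert]
    split
    · rename_i hax
      refine List.Forall₂.cons hac (List.Forall₂.cons hxy hf)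
    · rename_i hax
      have hxa : x ≤ a := le_of_not_ge (by simpa using hax)
      have hcy : c ≤ y := (List.pairwise_cons.1 hsort).1 y (by simp)
      have hsort' : List.Pairwise (· ≤ ·) (y :: l₂) := hsort.of_cons
      exact List.Forall₂.cons (le_trans hxa hac) (ih hsort' (le_trans hac hcy) hf)

lemma forall₂_orderedInsert {a b : α} :
    ∀ {l₁ l₂ : List α}, List.Pairwise (· ≤ ·) l₂ → a ≤ b →
      List.Forall₂ (· ≤ ·) l₁ l₂ →
      List.Forall₂ (· ≤ ·) (List.orderedInsert (· ≤ ·) a l₁)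
        (List.orderedInsert (· ≤ ·) b l₂) := by
  intro l₁ l₂ hsort hab hf
  induction hf with
  | nil => exact List.Forall₂.cons hab List.Forall₂.nil
  | cons hxy hf ih =>
    rename_i x y l₁ l₂
    simp only [List.orderedInsert]
    split
    · rename_i hax
      split
      · rename_i hby
        exact List.Forall₂.cons hab (List.Forall₂.cons hxy hf)
      · rename_i hby
        have hyb : y ≤ b := le_of_not_ge (by simpa using hby)
        have hay : a ≤ y := le_trans hax hxy
        exact List.Forall₂.cons hay
          (forall₂_orderedInsert_right hsort hyb (List.Forall₂.cons hxy hf))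
    · rename_i hax
      have hxa : x ≤ a := le_of_not_ge (by simpa using hax)
      split
      · rename_i hby
        refine List.Forall₂.cons (le_trans hxa hab) ?_
        exact forall₂_orderedInsert_left hsort (le_trans hab hby) hf
      · rename_i hby
        exact List.Forall₂.cons hxy (ih hsort.of_cons)

lemma sort_insert_eq_orderedInsert {a : α} {s : Finset α} (ha : a ∉ s) :
    Finset.sort (insert a s) (· ≤ ·) =
      List.orderedInsert (· ≤ ·) a (Finset.sort s (· ≤ ·)) := by
  refine (fun h1 h2 h3 => List.Perm.eq_of_pairwise' (r := (· ≤ ·)) h2 h3 h1) ?_ ?_ ?_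
  · exact (Finset.sort_perm_toList _ _).trans
      ((Finset.toList_insert ha).trans
        ((List.Perm.cons a (Finset.sort_perm_toList _ _).symm).trans
          (List.perm_orderedInsert _ a _).symm))
  · exact Finset.pairwise_sort _ _
  · exact List.Pairwise.orderedInsert a _ (Finset.pairwise_sort _ _)

lemma galeLe_refl (B : Finset α) : galeLe B B :=
  List.forall₂_same.2 fun x _ => le_refl x

lemma galeLe_insert {a b : α} {X Y : Finset α} (ha : a ∉ X) (hb : b ∉ Y)
    (hab : a ≤ b) (h : galeLe X Y) : galeLe (insert a X) (insert b Y) := by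
  unfold galeLe at h ⊢
  rw [sort_insert_eq_orderedInsert ha, sort_insert_eq_orderedInsert hb]
  exact forall₂_orderedInsert (Finset.pairwise_sort _ _) hab h

end Aux2
section Aux3
set_option linter.unusedSectionVars false
variable {α : Type*} [LinearOrder α] [DecidableEq α] [Fintype α]

lemma complex_contract {Γ : Finset α → Prop} (h : IsComplex Γ) (I : Finset α) :
    IsComplex (contract Γ I) := by
  rintro s t ⟨hd, hΓ⟩ hst
  exact ⟨Finset.disjoint_of_subset_left hst hd, h hΓ (Finset.union_subset_union_left hst)⟩

lemma contract_empty (Γ : Finset α → Prop) : contract Γ ∅ = Γ := by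
  funext s
  apply propext
  constructor
  · rintro ⟨-, h⟩
    rwa [Finset.union_empty] at h
  · intro h
    exact ⟨Finset.disjoint_empty_right s, by rwa [Finset.union_empty]⟩

lemma contract_contract {Γ : Finset α → Prop} {I : Finset α} {v : α} (hv : v ∈ I) :
    contract (contract Γ {v}) (I.erase v) = contract Γ I := by
  funext J
  apply propext
  constructor
  · rintro ⟨hd1, hd2, hΓ⟩
    have hvJ : v ∉ J := by
      intro hvJ
      exact (Finset.disjoint_left.1 hd2) (Finset.mem_union_left _ hvJ) (by simp)
    constructor
    · rw [Finset.disjoint_left]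
      intro x hxJ hxI
      by_cases hxv : x = v
      · exact hvJ (hxv ▸ hxJ)
      · exact (Finset.disjoint_left.1 hd1) hxJ (Finset.mem_erase.2 ⟨hxv, hxI⟩)
    · have : J ∪ I.erase v ∪ {v} = J ∪ I := by
        ext x
        simp only [Finset.mem_union, Finset.mem_erase, Finset.mem_singleton]
        constructor
        · rintro ((h | ⟨-, h⟩) | rfl)
          · exact Or.inl h
          · exact Or.inr h
          · exact Or.inr hv
        · rintro (h | h)
          · exact Or.inl (Or.inl h)
          · by_cases hxv : x = v
            · exact Or.inr hxv
            · exact Or.inl (Or.inr ⟨hxv, h⟩)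
      rwa [this] at hΓ
  · rintro ⟨hd, hΓ⟩
    have hvJ : v ∉ J := fun h => (Finset.disjoint_left.1 hd) h hv
    refine ⟨Finset.disjoint_of_subset_right (Finset.erase_subset _ _) hd, ?_, ?_⟩
    · rw [Finset.disjoint_singleton_right]
      simp only [Finset.mem_union, Finset.mem_erase]
      rintro (h | ⟨hne, -⟩)
      · exact hvJ h
      · exact hne rfl
    · have : J ∪ I.erase v ∪ {v} = J ∪ I := by
        ext x
        simp only [Finset.mem_union, Finset.mem_erase, Finset.mem_singleton]
        constructor
        · rintro ((h | ⟨-, h⟩) | rfl)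
          · exact Or.inl h
          · exact Or.inr h
          · exact Or.inr hv
        · rintro (h | h)
          · exact Or.inl (Or.inl h)
          · by_cases hxv : x = v
            · exact Or.inr hxv
            · exact Or.inl (Or.inr ⟨hxv, h⟩)
      rwa [this]

/-- Facets of the contraction are restrictions of facets. -/
lemma facet_contract_union {Γ : Finset α → Prop} {I J : Finset α}
    (h : IsFacet (contract Γ I) J) : IsFacet Γ (J ∪ I) ∧ Disjoint J I := by
  obtain ⟨⟨hd, hΓ⟩, hmax⟩ := h
  obtain ⟨C, hC, hJC⟩ := exists_facet Γ hΓ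
  have hIC : I ⊆ C := (Finset.subset_union_right).trans hJC
  have hJC' : J ⊆ C \ I := by
    intro x hx
    exact Finset.mem_sdiff.2 ⟨hJC (Finset.mem_union_left _ hx),
      fun hxI => (Finset.disjoint_left.1 hd) hx hxI⟩
  have hface : contract Γ I (C \ I) := by
    refine ⟨Finset.sdiff_disjoint, ?_⟩
    rw [Finset.sdiff_union_of_subset hIC]
    exact hC.1
  have hJeq : J = C \ I := hmax hface hJC'
  constructor
  · have hUe : J ∪ I = C := by rw [hJeq, Finset.sdiff_union_of_subset hIC]
    rw [hUe]
    exact hC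
  · exact hd

lemma facet_contract_of_facet {Γ : Finset α → Prop} {I C : Finset α}
    (hC : IsFacet Γ C) (hIC : I ⊆ C) : IsFacet (contract Γ I) (C \ I) := by
  constructor
  · exact ⟨Finset.sdiff_disjoint, by rw [Finset.sdiff_union_of_subset hIC]; exact hC.1⟩
  · rintro J ⟨hd, hΓ⟩ hsub
    have hCJ : C ⊆ J ∪ I := by
      intro x hx
      by_cases hxI : x ∈ I
      · exact Finset.mem_union_right _ hxI
      · exact Finset.mem_union_left _ (hsub (Finset.mem_sdiff.2 ⟨hx, hxI⟩))
    have hCeq : C = J ∪ I := hC.2 hΓ hCJ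
    apply Finset.Subset.antisymm hsub
    intro x hx
    refine Finset.mem_sdiff.2 ⟨?_, fun hxI => (Finset.disjoint_left.1 hd) hx hxI⟩
    rw [hCeq]
    exact Finset.mem_union_left _ hx

lemma pure_contract {Γ : Finset α → Prop} (h : IsPure Γ) (I : Finset α) :
    IsPure (contract Γ I) := by
  intro J J' hJ hJ'
  obtain ⟨hfJ, hdJ⟩ := facet_contract_union hJ
  obtain ⟨hfJ', hdJ'⟩ := facet_contract_union hJ'
  have := h hfJ hfJ'
  rw [Finset.card_union_of_disjoint hdJ, Finset.card_union_of_disjoint hdJ'] at this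
  omega

/-- Transfer of the lex order across removing a common subset. -/
lemma lexLe_sdiff {I B C : Finset α} (hIB : I ⊆ B) (hIC : I ⊆ C)
    (h : lexLe B C) : lexLe (B \ I) (C \ I) := by
  rcases h with rfl | ⟨a, ha, hall⟩
  · exact Or.inl rfl
  refine Or.inr ⟨a, ?_, ?_⟩
  · rw [Finset.mem_sdiff] at ha ⊢
    have haI : a ∉ I := fun h => ha.2 (hIC h)
    exact ⟨Finset.mem_sdiff.2 ⟨ha.1, haI⟩, fun h => ha.2 (Finset.mem_sdiff.1 h).1⟩
  · intro b hb
    apply hall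
    rw [Finset.mem_symmDiff] at hb ⊢
    simp only [Finset.mem_sdiff] at hb
    rcases hb with ⟨⟨h1, h2⟩, h3⟩ | ⟨⟨h1, h2⟩, h3⟩
    · exact Or.inl ⟨h1, fun hbC => h3 ⟨hbC, h2⟩⟩
    · exact Or.inr ⟨h1, fun hbB => h3 ⟨hbB, h2⟩⟩

end Aux3
section Aux4
set_option linter.unusedSectionVars false
variable {α : Type*} [LinearOrder α] [DecidableEq α] [Fintype α]

/-- Key consequence of FBP: the lex-min facet of any contraction, together with
the contracted face, is Gale-below every facet containing that face. -/
lemma galeLe_of_lexMin_contract {Δ : Finset α → Prop} (hFBP : FBP Δ) :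
    IsComplex Δ → IsPure Δ →
    ∀ I B C : Finset α, IsLexMinFacet (contract Δ I) B → IsFacet Δ C → I ⊆ C →
      galeLe (B ∪ I) C := by
  induction hFBP with
  | rank1 Δ h =>
    intro hcx hpure I B C hBlex hC hIC
    rcases Finset.eq_empty_or_nonempty I with rfl | ⟨v, hvI⟩
    · rw [contract_empty] at hBlex
      rw [Finset.union_empty]
      rcases hBlex.2 hC with rfl | ⟨a, ha, hall⟩
      · exact galeLe_refl _
      · rw [Finset.mem_sdiff] at ha
        have hcard : B.card = C.card := hpure hBlex.1 hC
        have hB1 : B.card ≤ 1 := h B hBlex.1.1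
        have hBcard : B.card = 1 := le_antisymm hB1 (Finset.card_pos.2 ⟨a, ha.1⟩)
        obtain ⟨x, hx⟩ := Finset.card_eq_one.1 hBcard
        obtain ⟨y, hy⟩ := Finset.card_eq_one.1 (hcard ▸ hBcard)
        have hax : a = x := by
          have := ha.1
          rw [hx, Finset.mem_singleton] at this
          exact this
        have hyC : y ∈ C := by rw [hy]; exact Finset.mem_singleton_self y
        have hyB : y ∉ B := by
          intro hmem
          rw [hx, Finset.mem_singleton] at hmem
          apply ha.2
          rw [hax, ← hmem]
          exact hyC
        have hay : a ≤ y := hall y (Finset.mem_symmDiff.2 (Or.inr ⟨hyC, hyB⟩))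
        rw [hx, hy, ← hax]
        unfold galeLe
        rw [Finset.sort_singleton, Finset.sort_singleton]
        exact List.Forall₂.cons hay List.Forall₂.nil
    · obtain ⟨⟨hd, hΓ⟩, -⟩ := hBlex.1
      have hcardBI : (B ∪ I).card ≤ 1 := h _ hΓ
      have hBempty : B = ∅ := by
        rw [Finset.eq_empty_iff_forall_notMem]
        intro x hxB
        have hx' : x ∈ B ∪ I := Finset.mem_union_left _ hxB
        have hv' : v ∈ B ∪ I := Finset.mem_union_right _ hvI
        have hxv : x = v := Finset.card_le_one.1 hcardBI x hx' v hv'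
        exact (Finset.disjoint_left.1 hd) hxB (by rw [hxv]; exact hvI)
      have hIC' : I = C := by
        apply Finset.eq_of_subset_of_card_le hIC
        have h1 : C.card ≤ 1 := h C hC.1
        have h2 : 1 ≤ I.card := Finset.card_pos.2 ⟨v, hvI⟩
        omega
      rw [hBempty, Finset.empty_union, hIC']
      exact galeLe_refl _
  | unique Δ Bh hB hu =>
    intro hcx hpure I B C hBlex hC hIC
    obtain ⟨hf, hd⟩ := facet_contract_union hBlex.1
    rw [hu _ hf, hu _ hC]
    exact galeLe_refl _
  | step Δ B₀ h₀ h1 h2 ih =>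
    intro hcx hpure I B C hBlex hC hIC
    by_cases hIB₀ : ∃ v ∈ I, v ∉ B₀
    · obtain ⟨v, hvI, hvB₀⟩ := hIB₀
      have hΔv : Δ {v} := hcx hC.1 (Finset.singleton_subset_iff.2 (hIC hvI))
      have harg1 : IsLexMinFacet (contract (contract Δ {v}) (I.erase v)) B := by
        rw [contract_contract hvI]
        exact hBlex
      have harg2 : IsFacet (contract Δ {v}) (C.erase v) := by
        have := facet_contract_of_facet hC (Finset.singleton_subset_iff.2 (hIC hvI))
        rwa [← Finset.erase_eq] at this
      have key := ih v hΔv hvB₀ (complex_contract hcx {v}) (pure_contract hpure {v})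
        (I.erase v) B (C.erase v) harg1 harg2 (Finset.erase_subset_erase v hIC)
      have hvB : v ∉ B ∪ I.erase v := by
        simp only [Finset.mem_union, Finset.mem_erase]
        rintro (h | ⟨hne, -⟩)
        · exact (Finset.disjoint_left.1 hBlex.1.1.1) h hvI
        · exact hne rfl
      have hmerge := galeLe_insert hvB (Finset.notMem_erase v C) le_rfl key
      rwa [← Finset.union_insert, Finset.insert_erase hvI,
        Finset.insert_erase (hIC hvI)] at hmerge
    · push_neg at hIB₀
      have hIB₀' : I ⊆ B₀ := fun v hv => hIB₀ v hv
      have hlexmin : IsLexMinFacet (contract Δ I) (B₀ \ I) := by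
        refine ⟨facet_contract_of_facet h₀.1 hIB₀', fun J hJ => ?_⟩
        obtain ⟨hfJ, hdJ⟩ := facet_contract_union hJ
        have hlex := lexLe_sdiff hIB₀' Finset.subset_union_right (h₀.2 hfJ)
        rwa [Finset.union_sdiff_right, Finset.sdiff_eq_self_of_disjoint hdJ] at hlex
      have hBeq : B = B₀ \ I := lexMinFacet_unique hBlex hlexmin
      have hBI : B ∪ I = B₀ := by rw [hBeq, Finset.sdiff_union_of_subset hIB₀']
      rw [hBI]
      by_cases hCB : C = B₀
      · rw [hCB]; exact galeLe_refl _
      have hCBne : (C \ B₀).Nonempty := by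
        rw [Finset.sdiff_nonempty]
        intro hsub
        exact hCB (Finset.eq_of_subset_of_card_le hsub (le_of_eq (hpure h₀.1 hC)))
      obtain ⟨v, hv⟩ := hCBne
      rw [Finset.mem_sdiff] at hv
      obtain ⟨hvC, hvB₀⟩ := hv
      have hΔv : Δ {v} := hcx hC.1 (Finset.singleton_subset_iff.2 hvC)
      obtain ⟨Bv, hBvlex, hBvsub⟩ := h2 v hΔv hvB₀
      have harg1 : IsLexMinFacet (contract (contract Δ {v}) ∅) Bv := by
        rw [contract_empty]
        exact hBvlex
      have harg2 : IsFacet (contract Δ {v}) (C.erase v) := by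
        have := facet_contract_of_facet hC (Finset.singleton_subset_iff.2 hvC)
        rwa [← Finset.erase_eq] at this
      have ihv := ih v hΔv hvB₀ (complex_contract hcx {v}) (pure_contract hpure {v})
        ∅ Bv (C.erase v) harg1 harg2 (Finset.empty_subset _)
      rw [Finset.union_empty] at ihv
      obtain ⟨hBvf, hBvd⟩ := facet_contract_union hBvlex.1
      have hvBv : v ∉ Bv := fun hmem =>
        (Finset.disjoint_left.1 hBvd) hmem (Finset.mem_singleton_self v)
      have hcardBv : Bv.card + 1 = B₀.card := by
        have := hpure hBvf h₀.1
        rwa [Finset.card_union_of_disjoint hBvd, Finset.card_singleton] at this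
      have hsd : (B₀ \ Bv).card = 1 := by
        rw [Finset.card_sdiff_of_subset hBvsub]
        omega
      obtain ⟨w, hw⟩ := Finset.card_eq_one.1 hsd
      have hwB₀Bv : w ∈ B₀ \ Bv := by rw [hw]; exact Finset.mem_singleton_self w
      rw [Finset.mem_sdiff] at hwB₀Bv
      obtain ⟨hwB₀, hwBv⟩ := hwB₀Bv
      have hB₀eq : B₀ = insert w Bv := by
        apply Finset.Subset.antisymm
        · intro x hx
          by_cases hxBv : x ∈ Bv
          · exact Finset.mem_insert_of_mem hxBv
          · have : x ∈ B₀ \ Bv := Finset.mem_sdiff.2 ⟨hx, hxBv⟩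
            rw [hw, Finset.mem_singleton] at this
            exact this ▸ Finset.mem_insert_self x Bv
        · exact Finset.insert_subset hwB₀ hBvsub
      have hfacetins : IsFacet Δ (insert v Bv) := by
        rw [Finset.insert_eq, Finset.union_comm]
        exact hBvf
      have hwv : w ≤ v := by
        rcases h₀.2 hfacetins with heq | ⟨a, ha, hall⟩
        · exact absurd (heq ▸ Finset.mem_insert_self v Bv) hvB₀
        · rw [Finset.mem_sdiff, Finset.mem_insert] at ha
          have haw : a = w := by
            have : a ∈ B₀ \ Bv := Finset.mem_sdiff.2 ⟨ha.1, fun hmem =>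
              ha.2 (Or.inr hmem)⟩
            rw [hw, Finset.mem_singleton] at this
            exact this
          have := hall v (Finset.mem_symmDiff.2
            (Or.inr ⟨Finset.mem_insert_self v Bv, hvB₀⟩))
          exact haw ▸ this
      have hmerge := galeLe_insert hwBv (Finset.notMem_erase v C) hwv ihv
      rwa [← hB₀eq, Finset.insert_erase hvC] at hmerge

end Aux4
section Aux5
set_option linter.unusedSectionVars false
variable {α : Type*} [LinearOrder α] [DecidableEq α] [Fintype α]

lemma facet_trunc_of_mem {Δ 𝒥 : Finset α → Prop}
    (h𝒥 : ∀ G, 𝒥 G → IsFacet Δ G) {G : Finset α} (hG : 𝒥 G) :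
    IsFacet (fun s => ∃ X, 𝒥 X ∧ s ⊆ X) G := by
  refine ⟨⟨G, hG, subset_rfl⟩, ?_⟩
  rintro C ⟨X, hX, hCX⟩ hGC
  have hGX : G = X := (h𝒥 G hG).2 (h𝒥 X hX).1 (hGC.trans hCX)
  exact Finset.Subset.antisymm hGC (by rw [hGX]; exact hCX)

lemma mem_of_facet_trunc {𝒥 : Finset α → Prop} {B : Finset α}
    (h : IsFacet (fun s => ∃ X, 𝒥 X ∧ s ⊆ X) B) : 𝒥 B := by
  obtain ⟨⟨X, hX, hBX⟩, hmax⟩ := h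
  have := hmax ⟨X, hX, subset_rfl⟩ hBX
  rw [this]
  exact hX

lemma trunc_contract_eq {𝒥 : Finset α → Prop} {I : Finset α} {v : α} (hv : v ∈ I) :
    contract (fun s => ∃ X, (v ∉ X ∧ 𝒥 (insert v X)) ∧ s ⊆ X) (I.erase v)
      = contract (fun s => ∃ G, 𝒥 G ∧ s ⊆ G) I := by
  funext J
  apply propext
  constructor
  · rintro ⟨hd, X, ⟨hvX, hJX⟩, hsubX⟩
    have hvJ : v ∉ J := fun h => hvX (hsubX (Finset.mem_union_left _ h))
    constructor
    · rw [Finset.disjoint_left]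
      intro x hxJ hxI
      have hxv : x ≠ v := fun h => hvJ (h ▸ hxJ)
      exact (Finset.disjoint_left.1 hd) hxJ (Finset.mem_erase.2 ⟨hxv, hxI⟩)
    · refine ⟨insert v X, hJX, ?_⟩
      intro x hx
      rcases Finset.mem_union.1 hx with hxJ | hxI
      · exact Finset.mem_insert_of_mem (hsubX (Finset.mem_union_left _ hxJ))
      · by_cases hxv : x = v
        · exact hxv ▸ Finset.mem_insert_self v X
        · exact Finset.mem_insert_of_mem
            (hsubX (Finset.mem_union_right _ (Finset.mem_erase.2 ⟨hxv, hxI⟩)))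
  · rintro ⟨hd, G, hG, hsubG⟩
    have hvJ : v ∉ J := fun h => (Finset.disjoint_left.1 hd) h hv
    have hvG : v ∈ G := hsubG (Finset.mem_union_right _ hv)
    refine ⟨Finset.disjoint_of_subset_right (Finset.erase_subset _ _) hd,
      G.erase v, ⟨Finset.notMem_erase _ _, by rwa [Finset.insert_erase hvG]⟩, ?_⟩
    intro x hx
    rcases Finset.mem_union.1 hx with hxJ | hxI
    · exact Finset.mem_erase.2 ⟨fun h => hvJ (h ▸ hxJ),
        hsubG (Finset.mem_union_left _ hxJ)⟩
    · exact Finset.mem_erase.2 ⟨(Finset.mem_erase.1 hxI).1,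
        hsubG (Finset.mem_union_right _ (Finset.erase_subset _ _ hxI))⟩

/-- The main exchange statement for Gale truncations, proved by induction on FBP. -/
lemma main_exchange {Δ : Finset α → Prop} (hFBP : FBP Δ) :
    IsComplex Δ → IsPure Δ →
    ∀ 𝒥 : Finset α → Prop, (∀ G, 𝒥 G → IsFacet Δ G) →
      (∀ G G', 𝒥 G → IsFacet Δ G' → galeLe G' G → 𝒥 G') →
      ∀ I I₁ I₂ B : Finset α,
        (∃ G, 𝒥 G ∧ I₁ ⊆ G) → (∃ G, 𝒥 G ∧ I₂ ⊆ G) → I₂.card < I₁.card →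
        I ⊆ I₁ → I ⊆ I₂ →
        IsLexMinFacet (contract (fun s => ∃ G, 𝒥 G ∧ s ⊆ G) I) B →
        I₁ \ I ⊆ B →
        ∃ e ∈ I₁ \ I₂, ∃ G, 𝒥 G ∧ insert e I₂ ⊆ G := by
  induction hFBP with
  | rank1 Δ h =>
    intro hcx hpure 𝒥 h𝒥 hdown I I₁ I₂ B hI₁ hI₂ hcard hII₁ hII₂ hBlex hsub
    obtain ⟨G₁, hG₁, hIG₁⟩ := hI₁
    have hcard₁ : I₁.card ≤ 1 :=
      le_trans (Finset.card_le_card hIG₁) (h G₁ (h𝒥 G₁ hG₁).1)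
    have hI₂e : I₂ = ∅ := Finset.card_eq_zero.1 (by omega)
    obtain ⟨e, he⟩ := Finset.card_eq_one.1 (by omega : I₁.card = 1)
    refine ⟨e, ?_, G₁, hG₁, ?_⟩
    · rw [he, hI₂e]
      simp
    · rw [hI₂e]
      have : insert e (∅ : Finset α) = {e} := rfl
      rw [this, ← he]
      exact hIG₁
  | unique Δ Bh hB hu =>
    intro hcx hpure 𝒥 h𝒥 hdown I I₁ I₂ B hI₁ hI₂ hcard hII₁ hII₂ hBlex hsub
    obtain ⟨G₁, hG₁, hIG₁⟩ := hI₁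
    obtain ⟨G₂, hG₂, hIG₂⟩ := hI₂
    have e₁ : G₁ = Bh := hu _ (h𝒥 _ hG₁)
    have e₂ : G₂ = Bh := hu _ (h𝒥 _ hG₂)
    have hne : (I₁ \ I₂).Nonempty := by
      rw [Finset.sdiff_nonempty]
      intro hsub'
      exact absurd (Finset.card_le_card hsub') (by omega)
    obtain ⟨e, he⟩ := hne
    refine ⟨e, he, G₁, hG₁, Finset.insert_subset (hIG₁ (Finset.mem_sdiff.1 he).1) ?_⟩
    rw [e₁, ← e₂]
    exact hIG₂
  | step Δ B₀ h₀ h1 h2 ih =>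
    intro hcx hpure 𝒥 h𝒥 hdown I I₁ I₂ B hI₁ hI₂ hcard hII₁ hII₂ hBlex hsub
    obtain ⟨G₁, hG₁, hIG₁⟩ := hI₁
    obtain ⟨G₂, hG₂, hIG₂⟩ := hI₂
    have hFBPΔ : FBP Δ := FBP.step Δ B₀ h₀ h1 h2
    have hB0lexE : IsLexMinFacet (contract Δ ∅) B₀ := by
      rw [contract_empty]
      exact h₀
    have hgle := galeLe_of_lexMin_contract hFBPΔ hcx hpure ∅ B₀ G₁ hB0lexE
      (h𝒥 _ hG₁) (Finset.empty_subset _)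
    rw [Finset.union_empty] at hgle
    have hB₀J : 𝒥 B₀ := hdown G₁ B₀ hG₁ h₀.1 hgle
    by_cases hIB₀ : ∃ v ∈ I, v ∉ B₀
    · -- contract a vertex of I outside B₀
      obtain ⟨v, hvI, hvB₀⟩ := hIB₀
      have hvI₁ : v ∈ I₁ := hII₁ hvI
      have hvI₂ : v ∈ I₂ := hII₂ hvI
      have hΔv : Δ {v} := hcx (h𝒥 _ hG₁).1 (Finset.singleton_subset_iff.2 (hIG₁ hvI₁))
      have h𝒥v : ∀ X, (v ∉ X ∧ 𝒥 (insert v X)) → IsFacet (contract Δ {v}) X := by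
        rintro X ⟨hvX, hJX⟩
        have := facet_contract_of_facet (h𝒥 _ hJX)
          (Finset.singleton_subset_iff.2 (Finset.mem_insert_self v X))
        rwa [← Finset.erase_eq, Finset.erase_insert hvX] at this
      have hdownv : ∀ X Y, (v ∉ X ∧ 𝒥 (insert v X)) → IsFacet (contract Δ {v}) Y →
          galeLe Y X → (v ∉ Y ∧ 𝒥 (insert v Y)) := by
        rintro X Y ⟨hvX, hJX⟩ hYf hYX
        obtain ⟨hYfΔ, hYd⟩ := facet_contract_union hYf
        have hvY : v ∉ Y := fun hmem =>
          (Finset.disjoint_left.1 hYd) hmem (Finset.mem_singleton_self v)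
        refine ⟨hvY, ?_⟩
        have hgl := galeLe_insert hvY hvX le_rfl hYX
        refine hdown (insert v X) (insert v Y) hJX ?_ hgl
        rw [Finset.insert_eq, Finset.union_comm]
        exact hYfΔ
      have herase_sdiff : (I₁.erase v) \ (I.erase v) ⊆ B := by
        intro x hx
        rw [Finset.mem_sdiff, Finset.mem_erase] at hx
        obtain ⟨⟨hxv, hxI₁⟩, hxnI⟩ := hx
        apply hsub
        rw [Finset.mem_sdiff]
        refine ⟨hxI₁, fun hxI => hxnI (Finset.mem_erase.2 ⟨hxv, hxI⟩)⟩
      obtain ⟨e, he, X, hX, hsubX⟩ := ih v hΔv hvB₀ (complex_contract hcx {v})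
        (pure_contract hpure {v}) (fun X => v ∉ X ∧ 𝒥 (insert v X)) h𝒥v hdownv
        (I.erase v) (I₁.erase v) (I₂.erase v) B
        ⟨G₁.erase v, ⟨Finset.notMem_erase _ _,
          by rw [Finset.insert_erase (hIG₁ hvI₁)]; exact hG₁⟩,
          Finset.erase_subset_erase v hIG₁⟩
        ⟨G₂.erase v, ⟨Finset.notMem_erase _ _,
          by rw [Finset.insert_erase (hIG₂ hvI₂)]; exact hG₂⟩,
          Finset.erase_subset_erase v hIG₂⟩
        (by
          rw [Finset.card_erase_of_mem hvI₁, Finset.card_erase_of_mem hvI₂]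
          have : 1 ≤ I₂.card := Finset.card_pos.2 ⟨v, hvI₂⟩
          omega)
        (Finset.erase_subset_erase v hII₁) (Finset.erase_subset_erase v hII₂)
        (by rw [trunc_contract_eq hvI]; exact hBlex)
        herase_sdiff
      rw [Finset.mem_sdiff, Finset.mem_erase, Finset.mem_erase] at he
      obtain ⟨⟨hev, heI₁⟩, henI₂⟩ := he
      refine ⟨e, Finset.mem_sdiff.2 ⟨heI₁, fun heI₂ => henI₂ ⟨hev, heI₂⟩⟩,
        insert v X, hX.2, ?_⟩
      intro x hx
      rcases Finset.mem_insert.1 hx with rfl | hxI₂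
      · exact Finset.mem_insert_of_mem (hsubX (Finset.mem_insert_self _ _))
      · by_cases hxv : x = v
        · exact hxv ▸ Finset.mem_insert_self v X
        · exact Finset.mem_insert_of_mem
            (hsubX (Finset.mem_insert_of_mem (Finset.mem_erase.2 ⟨hxv, hxI₂⟩)))
    · push_neg at hIB₀
      have hIB₀' : I ⊆ B₀ := fun v hv => hIB₀ v hv
      have hB₀facet' : IsFacet (fun s => ∃ X, 𝒥 X ∧ s ⊆ X) B₀ :=
        facet_trunc_of_mem h𝒥 hB₀J
      have hlexmin' : IsLexMinFacet
          (contract (fun s => ∃ G, 𝒥 G ∧ s ⊆ G) I) (B₀ \ I) := by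
        refine ⟨facet_contract_of_facet hB₀facet' hIB₀', fun J hJ => ?_⟩
        obtain ⟨hfJ', hdJ⟩ := facet_contract_union hJ
        have hJ𝒥 : 𝒥 (J ∪ I) := mem_of_facet_trunc hfJ'
        have hlex := lexLe_sdiff hIB₀' Finset.subset_union_right (h₀.2 (h𝒥 _ hJ𝒥))
        rwa [Finset.union_sdiff_right, Finset.sdiff_eq_self_of_disjoint hdJ] at hlex
      have hBeq : B = B₀ \ I := lexMinFacet_unique hBlex hlexmin'
      have hI₁B₀ : I₁ ⊆ B₀ := by
        intro x hx
        by_cases hxI : x ∈ I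
        · exact hIB₀' hxI
        · have := hsub (Finset.mem_sdiff.2 ⟨hx, hxI⟩)
          rw [hBeq, Finset.mem_sdiff] at this
          exact this.1
      by_cases hI₂B₀ : I₂ ⊆ B₀
      · have hne : (I₁ \ I₂).Nonempty := by
          rw [Finset.sdiff_nonempty]
          intro hsub'
          exact absurd (Finset.card_le_card hsub') (by omega)
        obtain ⟨e, he⟩ := hne
        exact ⟨e, he, B₀, hB₀J,
          Finset.insert_subset (hI₁B₀ (Finset.mem_sdiff.1 he).1) hI₂B₀⟩
      · obtain ⟨v, hvI₂, hvB₀⟩ := Finset.not_subset.1 hI₂B₀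
        have hvI₁ : v ∉ I₁ := fun hmem => hvB₀ (hI₁B₀ hmem)
        have hΔv : Δ {v} := hcx (h𝒥 _ hG₂).1 (Finset.singleton_subset_iff.2 (hIG₂ hvI₂))
        obtain ⟨Bv, hBvlex, hBvsub⟩ := h2 v hΔv hvB₀
        obtain ⟨hBvf, hBvd⟩ := facet_contract_union hBvlex.1
        have hvBv : v ∉ Bv := fun hmem =>
          (Finset.disjoint_left.1 hBvd) hmem (Finset.mem_singleton_self v)
        have hins : IsFacet Δ (insert v Bv) := by
          rw [Finset.insert_eq, Finset.union_comm]
          exact hBvf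
        have hgle2 := galeLe_of_lexMin_contract hFBPΔ hcx hpure {v} Bv G₂ hBvlex
          (h𝒥 _ hG₂) (Finset.singleton_subset_iff.2 (hIG₂ hvI₂))
        have h𝒥ins : 𝒥 (insert v Bv) := by
          refine hdown G₂ _ hG₂ hins ?_
          rw [Finset.insert_eq, Finset.union_comm]
          exact hgle2
        -- the element w with B₀ = insert w Bv
        have hcardBv : Bv.card + 1 = B₀.card := by
          have := hpure hBvf h₀.1
          rwa [Finset.card_union_of_disjoint hBvd, Finset.card_singleton] at this
        have hsd : (B₀ \ Bv).card = 1 := by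
          rw [Finset.card_sdiff_of_subset hBvsub]
          omega
        obtain ⟨w, hw⟩ := Finset.card_eq_one.1 hsd
        have hwB₀Bv : w ∈ B₀ \ Bv := by
          rw [hw]
          exact Finset.mem_singleton_self w
        rw [Finset.mem_sdiff] at hwB₀Bv
        obtain ⟨hwB₀, hwBv⟩ := hwB₀Bv
        have hB₀eq : B₀ = insert w Bv := by
          apply Finset.Subset.antisymm
          · intro x hx
            by_cases hxBv : x ∈ Bv
            · exact Finset.mem_insert_of_mem hxBv
            · have : x ∈ B₀ \ Bv := Finset.mem_sdiff.2 ⟨hx, hxBv⟩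
              rw [hw, Finset.mem_singleton] at this
              exact this ▸ Finset.mem_insert_self x Bv
          · exact Finset.insert_subset hwB₀ hBvsub
        have herase : I₁.erase w ⊆ Bv := by
          intro x hx
          rw [Finset.mem_erase] at hx
          have : x ∈ insert w Bv := hB₀eq ▸ hI₁B₀ hx.2
          rcases Finset.mem_insert.1 this with rfl | hmem
          · exact absurd rfl hx.1
          · exact hmem
        -- 𝒥v structure
        have h𝒥v : ∀ X, (v ∉ X ∧ 𝒥 (insert v X)) → IsFacet (contract Δ {v}) X := by
          rintro X ⟨hvX, hJX⟩
          have := facet_contract_of_facet (h𝒥 _ hJX)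
            (Finset.singleton_subset_iff.2 (Finset.mem_insert_self v X))
          rwa [← Finset.erase_eq, Finset.erase_insert hvX] at this
        have hdownv : ∀ X Y, (v ∉ X ∧ 𝒥 (insert v X)) → IsFacet (contract Δ {v}) Y →
            galeLe Y X → (v ∉ Y ∧ 𝒥 (insert v Y)) := by
          rintro X Y ⟨hvX, hJX⟩ hYf hYX
          obtain ⟨hYfΔ, hYd⟩ := facet_contract_union hYf
          have hvY : v ∉ Y := fun hmem =>
            (Finset.disjoint_left.1 hYd) hmem (Finset.mem_singleton_self v)
          refine ⟨hvY, ?_⟩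
          have hgl := galeLe_insert hvY hvX le_rfl hYX
          refine hdown (insert v X) (insert v Y) hJX ?_ hgl
          rw [Finset.insert_eq, Finset.union_comm]
          exact hYfΔ
        have hBvJv : v ∉ Bv ∧ 𝒥 (insert v Bv) := ⟨hvBv, h𝒥ins⟩
        have hBvlex' : IsLexMinFacet
            (fun s => ∃ X, (v ∉ X ∧ 𝒥 (insert v X)) ∧ s ⊆ X) Bv :=
          ⟨facet_trunc_of_mem h𝒥v hBvJv,
            fun Y hY => hBvlex.2 (h𝒥v _ (mem_of_facet_trunc hY))⟩
        obtain ⟨e, he, X, hX, hsubX⟩ := ih v hΔv hvB₀ (complex_contract hcx {v})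
          (pure_contract hpure {v}) (fun X => v ∉ X ∧ 𝒥 (insert v X)) h𝒥v hdownv
          ∅ (I₁.erase w) (I₂.erase v) Bv
          ⟨Bv, hBvJv, herase⟩
          ⟨G₂.erase v, ⟨Finset.notMem_erase _ _,
            by rw [Finset.insert_erase (hIG₂ hvI₂)]; exact hG₂⟩,
            Finset.erase_subset_erase v hIG₂⟩
          (by
            rw [Finset.card_erase_of_mem hvI₂]
            have h1 : 1 ≤ I₂.card := Finset.card_pos.2 ⟨v, hvI₂⟩
            have h2 : I₁.card - 1 ≤ (I₁.erase w).card := Finset.pred_card_le_card_erase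
            omega)
          (Finset.empty_subset _) (Finset.empty_subset _)
          (by rw [contract_empty]; exact hBvlex')
          (by rw [Finset.sdiff_empty]; exact herase)
        rw [Finset.mem_sdiff, Finset.mem_erase] at he
        obtain ⟨⟨hew, heI₁⟩, henI₂⟩ := he
        have heBv : e ∈ Bv := herase (Finset.mem_erase.2 ⟨hew, heI₁⟩)
        have hev : e ≠ v := fun h => hvBv (h ▸ heBv)
        refine ⟨e, Finset.mem_sdiff.2 ⟨heI₁, fun heI₂ =>
          henI₂ (Finset.mem_erase.2 ⟨hev, heI₂⟩)⟩, insert v X, hX.2, ?_⟩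
        intro x hx
        rcases Finset.mem_insert.1 hx with rfl | hxI₂
        · exact Finset.mem_insert_of_mem (hsubX (Finset.mem_insert_self _ _))
        · by_cases hxv : x = v
          · exact hxv ▸ Finset.mem_insert_self v X
          · exact Finset.mem_insert_of_mem
              (hsubX (Finset.mem_insert_of_mem (Finset.mem_erase.2 ⟨hxv, hxI₂⟩)))

end Aux5
/-- a Gale truncation of a pure complex satisfying the
quasi-independence axiom and the First Basis Property satisfies the
quasi-independence axiom. -/
theorem stmt19 (E : Finset α) (Δ : Finset α → Prop) (hΔ : IsComplexOn E Δ)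
    (hQI : QI Δ) (hFBP : FBP Δ) (𝒥 : Finset α → Prop)
    (h𝒥 : ∀ B, 𝒥 B → IsFacet Δ B)
    (hdown : ∀ B B', 𝒥 B → IsFacet Δ B' → galeLe B' B → 𝒥 B') :
    QI (fun s => ∃ B, 𝒥 B ∧ s ⊆ B) := by
  constructor
  · intro B B' hB hB'
    exact hQI.1 (h𝒥 _ (mem_of_facet_trunc hB)) (h𝒥 _ (mem_of_facet_trunc hB'))
  · rintro I₁ I₂ hI₁ hI₂ hcard ⟨I, hIsub, B, hBlex, hsub⟩
    exact main_exchange hFBP hΔ.2 hQI.1 𝒥 h𝒥 hdown I I₁ I₂ B hI₁ hI₂ hcard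
      (hIsub.trans Finset.inter_subset_left) (hIsub.trans Finset.inter_subset_right)
      hBlex hsub
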